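/- If i is a call position of a word σ with matching return j, and i' is a call position with i < i' < j, then the matching return of i' (if it exists) is strictly smaller than j; in other words, matched call-return pairs are well-nested. -/
import Mathlib


inductive SymKind where
  | call | ret | intl
deriving DecidableEq

/-- Well-matched words over a pushdown alphabet, where `k` assigns to each
letter its kind (call, return, or internal). -/
inductive WellMatched {A : Type*} (k : A → SymKind) : List A → Prop
  | nil : WellMatched k []
  | int {a : A} {s : List A} : k a = SymKind.intl → WellMatched k s →
      WellMatched k (a :: s)
  | matched {c r : A} {s s' : List A} : k c = SymKind.call → k r = SymKind.ret →
      WellMatched k s → WellMatched k s' →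
      WellMatched k (c :: (s ++ r :: s'))

/-- Number of call symbols in a finite word. -/
def callCount {A : Type*} (k : A → SymKind) (s : List A) : ℕ :=
  s.countP (fun a => decide (k a = SymKind.call))

/-- Number of return symbols in a finite word. -/
def retCount {A : Type*} (k : A → SymKind) (s : List A) : ℕ :=
  s.countP (fun a => decide (k a = SymKind.ret))

/-- The finite subword `σ[i, j-1]` of the infinite word `σ` (letters at
positions `i, i+1, ..., j-1`). -/
def wordSlice {A : Type*} (σ : ℕ → A) (i j : ℕ) : List A :=
  (List.range (j - i)).map fun n => σ (i + n)

/-- `j` is a matching return of position `i`: `j > i`, `j` is a return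
position, and the subword `σ[i+1, j-1]` is well-matched. -/
def MatchRet {A : Type*} (k : A → SymKind) (σ : ℕ → A) (i j : ℕ) : Prop :=
  i < j ∧ k (σ j) = SymKind.ret ∧ WellMatched k (wordSlice σ (i + 1) j)

/-- The abstract-successor relation `SUCC(abs, σ, i) = j`. -/
def AbsSucc {A : Type*} (k : A → SymKind) (σ : ℕ → A) (i j : ℕ) : Prop :=
  if k (σ i) = SymKind.call then MatchRet k σ i j
  else j = i + 1 ∧ k (σ (i + 1)) ≠ SymKind.ret

/-- `j` is a candidate caller of `i`: a call position `j < i` whose abstract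
successor is undefined or greater than `i`. -/
def CallerCand {A : Type*} (k : A → SymKind) (σ : ℕ → A) (i j : ℕ) : Prop :=
  j < i ∧ k (σ j) = SymKind.call ∧ ∀ m, AbsSucc k σ j m → i < m

/-- `j` is the caller of `i`: the greatest candidate caller. -/
def Caller {A : Type*} (k : A → SymKind) (σ : ℕ → A) (i j : ℕ) : Prop :=
  CallerCand k σ i j ∧ ∀ j', CallerCand k σ i j' → j' ≤ j

/-- `S` is a maximal abstract path (MAP): the set of positions reachable via
the abstract successor from a position `i0` with no abstract predecessor. -/
def IsMAP {A : Type*} (k : A → SymKind) (σ : ℕ → A) (S : Set ℕ) : Prop :=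
  ∃ i0, (¬ ∃ p, AbsSucc k σ p i0) ∧
    S = {j | Relation.ReflTransGen (AbsSucc k σ) i0 j}

/-- The set of positions of the (unique) maximal abstract path visiting `i`. -/
def PosA {A : Type*} (k : A → SymKind) (σ : ℕ → A) (i : ℕ) : Set ℕ :=
  {j | Relation.ReflTransGen (AbsSucc k σ) i j ∨
       Relation.ReflTransGen (AbsSucc k σ) j i}

/-- The set of positions of the caller path of `σ` from `i`. -/
def PosC {A : Type*} (k : A → SymKind) (σ : ℕ → A) (i : ℕ) : Set ℕ :=
  {j | Relation.ReflTransGen (fun a b => Caller k σ a b) i j}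

lemma callCount_append {A : Type*} (k : A → SymKind) (s t : List A) :
    callCount k (s ++ t) = callCount k s + callCount k t := by
  simp [callCount, List.countP_append]

lemma retCount_append {A : Type*} (k : A → SymKind) (s t : List A) :
    retCount k (s ++ t) = retCount k s + retCount k t := by
  simp [retCount, List.countP_append]

lemma wm_count {A : Type*} {k : A → SymKind} {s : List A} (h : WellMatched k s) :
    callCount k s = retCount k s := by
  induction h with
  | nil => rfl
  | int ha _ ih =>
      simp [callCount, retCount, List.countP_cons, ha] at *
      omega
  | matched hc hr _ _ ih1 ih2 =>
      simp [callCount, retCount, List.countP_cons, List.countP_append, hc, hr] at *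
      omega

lemma wm_prefix {A : Type*} {k : A → SymKind} {s : List A} (h : WellMatched k s) :
    ∀ t, t <+: s → retCount k t ≤ callCount k t := by
  induction h with
  | nil =>
      intro t ht
      simp [List.prefix_nil] at ht
      simp [ht, callCount, retCount]
  | int ha _hw ih =>
      rename_i a s'
      intro t ht
      rcases t with _ | ⟨b, t'⟩
      · simp [callCount, retCount]
      · obtain ⟨u, hu⟩ := ht
        simp only [List.cons_append] at hu
        obtain ⟨rfl, hs⟩ := List.cons.injEq .. ▸ hu
        have ht' : t' <+: s' := ⟨u, hs⟩
        have := ih t' ht'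
        simp [callCount, retCount, List.countP_cons, ha] at *
        omega
  | matched hcc hrr hws hws' ih1 ih2 =>
      rename_i c r s s'
      intro t ht
      rcases t with _ | ⟨b, t'⟩
      · simp [callCount, retCount]
      · obtain ⟨u, hu⟩ := ht
        simp only [List.cons_append] at hu
        obtain ⟨rfl, hs⟩ := List.cons.injEq .. ▸ hu
        have ht' : t' <+: s ++ r :: s' := ⟨u, hs⟩
        have hsp : s <+: s ++ r :: s' := ⟨r :: s', rfl⟩
        rcases List.prefix_or_prefix_of_prefix ht' hsp with hts | hst
        · have := ih1 t' hts
          simp [callCount, retCount, List.countP_cons, hcc] at *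
          omega
        · obtain ⟨v, rfl⟩ := hst
          rcases v with _ | ⟨d, v'⟩
          · have := wm_count hws
            simp [callCount, retCount, List.countP_cons, List.countP_append, hcc] at *
            omega
          · have hdr : d = r ∧ v' <+: s' := by
              have : s ++ d :: v' ++ u = s ++ r :: s' := hs
              rw [List.append_assoc, List.append_right_inj] at this
              simp only [List.cons_append, List.cons.injEq] at this
              exact ⟨this.1, ⟨u, this.2⟩⟩
            obtain ⟨rfl, hv'⟩ := hdr
            have h1 := wm_count hws
            have h2 := ih2 v' hv'
            simp [callCount, retCount, List.countP_cons, List.countP_append, hcc, hrr] at *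
            omega

lemma slice_snoc {A : Type*} (σ : ℕ → A) {a b : ℕ} (h : a ≤ b) :
    wordSlice σ a (b + 1) = wordSlice σ a b ++ [σ b] := by
  unfold wordSlice
  rw [show b + 1 - a = (b - a) + 1 by omega, List.range_succ, List.map_append]
  simp [show a + (b - a) = b by omega]

lemma slice_append {A : Type*} (σ : ℕ → A) {a b c : ℕ} (hab : a ≤ b) (hbc : b ≤ c) :
    wordSlice σ a b ++ wordSlice σ b c = wordSlice σ a c := by
  induction c, hbc using Nat.le_induction with
  | base => simp [wordSlice]
  | succ c hbc ih =>
      rw [slice_snoc σ hbc, slice_snoc σ (le_trans hab hbc), ← ih, List.append_assoc]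

/-- matched call-return pairs are well-nested: the matching return
of a call `i'` lying strictly between a call `i` and its matching return `j`
is strictly smaller than `j`. -/
theorem matchRet_nested {A : Type*} (k : A → SymKind) (σ : ℕ → A)
    {i j i' j' : ℕ} (hc : k (σ i) = SymKind.call) (hm : MatchRet k σ i j)
    (hc' : k (σ i') = SymKind.call) (h1 : i < i') (h2 : i' < j)
    (hm' : MatchRet k σ i' j') : j' < j := by
  by_contra hle
  push_neg at hle  -- j ≤ j'
  obtain ⟨hij, hjret, hwu⟩ := hm
  obtain ⟨hij', hjret', hwv⟩ := hm'
  -- u = σ[i+1, j), v = σ[i'+1, j')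
  set u := wordSlice σ (i + 1) j with hu
  set v := wordSlice σ (i' + 1) j' with hv
  set w0 := wordSlice σ (i + 1) i' with hw0
  set t := wordSlice σ (i' + 1) j with ht
  have hsplit : w0 ++ [σ i'] ++ t = u := by
    rw [hu, hw0, ht, ← slice_snoc σ (by omega), slice_append σ (by omega) (by omega)]
  -- prefix count for w0
  have hpre0 : retCount k w0 ≤ callCount k w0 :=
    wm_prefix hwu w0 ⟨[σ i'] ++ t, by rw [← hsplit]; simp⟩
  have htot : callCount k u = retCount k u := wm_count hwu
  have hcu : callCount k u = callCount k w0 + 1 + callCount k t := by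
    rw [← hsplit, callCount_append, callCount_append]
    simp [callCount, hc']
  have hru : retCount k u = retCount k w0 + retCount k t := by
    rw [← hsplit, retCount_append, retCount_append]
    simp [retCount, hc']
  have hkey : callCount k t + 1 ≤ retCount k t := by omega
  rcases eq_or_lt_of_le hle with rfl | hlt
  · have : callCount k t = retCount k t := wm_count hwv
    omega
  · -- j < j', so t ++ [σ j] is a prefix of v
    have hpre : t ++ [σ j] <+: v := by
      refine ⟨wordSlice σ (j + 1) j', ?_⟩
      rw [hv, ht, ← slice_snoc σ (by omega), slice_append σ (by omega) (by omega)]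
    have hthis := wm_prefix hwv _ hpre
    rw [callCount_append, retCount_append] at hthis
    have hx1 : callCount k [σ j] = 0 := by simp [callCount, hjret]
    have hx2 : retCount k [σ j] = 1 := by simp [retCount, hjret]
    omega
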